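/- arXiv:1605.05398 — 5 statements merged into one kernel-verified Lean document; each statement's English description precedes it below -/
import Mathlib

section
/- Let O be the ring of integers of a number field, I ⊆ O a nonzero ideal, and A = (a b; c d) ∈ SL₂(O) a matrix congruent to the identity modulo I (i.e. a-1, b, c, d-1 ∈ I). Write x₀ = (a+d)/2, x₁ = (a-d)/2, x₂ = (b+c)/2, x₃ = (b-c)/2 and y₀ = x₀ - 1, all elements of the field K. Then y₀ lies in the fractional ideal I²/8. -/
open Matrix MatrixGroups

/-- If `A ∈ SL₂(𝓞 K)` is congruent to the identity modulo a nonzero ideal `I`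
(i.e. `a-1, b, c, d-1 ∈ I`), then `y₀ = (a+d)/2 - 1` lies in the fractional ideal `I²/8`. -/
theorem stmt0 (K : Type*) [Field K] [NumberField K]
    (I : Ideal (NumberField.RingOfIntegers K)) (hI : I ≠ ⊥)
    (A : SL(2, NumberField.RingOfIntegers K))
    (ha : A.1 0 0 - 1 ∈ I) (hb : A.1 0 1 ∈ I) (hc : A.1 1 0 ∈ I) (hd : A.1 1 1 - 1 ∈ I) :
    ∃ w ∈ I ^ 2,
      (algebraMap (NumberField.RingOfIntegers K) K (A.1 0 0) +
          algebraMap (NumberField.RingOfIntegers K) K (A.1 1 1)) / 2 - 1 =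
        algebraMap (NumberField.RingOfIntegers K) K w / 8 := by
  have hdet : A.1 0 0 * A.1 1 1 - A.1 0 1 * A.1 1 0 = 1 := by
    have := A.2
    rwa [Matrix.det_fin_two] at this
  refine ⟨4 * (A.1 0 1 * A.1 1 0 - (A.1 0 0 - 1) * (A.1 1 1 - 1)), ?_, ?_⟩
  · apply Ideal.mul_mem_left
    rw [sq]
    exact Submodule.sub_mem _ (Ideal.mul_mem_mul hb hc) (Ideal.mul_mem_mul ha hd)
  · have hw : (4 : NumberField.RingOfIntegers K) * (A.1 0 1 * A.1 1 0 -
        (A.1 0 0 - 1) * (A.1 1 1 - 1)) = 4 * (A.1 0 0 + A.1 1 1 - 2) := by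
      linear_combination (-4 : NumberField.RingOfIntegers K) * hdet
    rw [hw]
    simp only [_root_.map_mul, _root_.map_add, _root_.map_sub, map_ofNat, _root_.map_one]
    ring
end

section
/- Let K be a totally real number field of degree n with embeddings σ₁,…,σₙ : K → ℝ, O its ring of integers, and I ⊆ O a nonzero ideal. Let A ∈ SL₂(O) be congruent to the identity modulo I, with y₀ = (tr(A) - 2)/2 ≠ 0. Then there exists j ∈ {1,…,n} such that |tr(σⱼ(A))| ≥ N(I)^{2/n}/4 - 2. -/
open Matrix MatrixGroups

/-- Product formula over complex embeddings. -/
lemma prod_abs_embeddings {K : Type*} [Field K] [NumberField K] (y : K) :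
    ∏ φ : K →+* ℂ, ‖φ y‖ = |(Algebra.norm ℚ y : ℚ)| := by
  have h := congrArg (fun z : ℂ => ‖z‖) (Algebra.norm_eq_prod_embeddings ℚ ℂ y)
  rw [norm_prod] at h
  calc ∏ φ : K →+* ℂ, ‖φ y‖
      = ∏ ψ : K →ₐ[ℚ] ℂ, ‖ψ y‖ :=
        Fintype.prod_equiv (RingHom.equivRatAlgHom K ℂ) _ _
          (fun φ => by simp [RingHom.equivRatAlgHom_apply])
    _ = ‖algebraMap ℚ ℂ ((Algebra.norm ℚ) y)‖ := h.symm
    _ = |(Algebra.norm ℚ y : ℚ)| := by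
        rw [eq_ratCast]
        rw [show ((Algebra.norm ℚ y : ℚ) : ℂ) = (((Algebra.norm ℚ y : ℚ) : ℝ) : ℂ) by push_cast; ring,
          Complex.norm_real, Real.norm_eq_abs]
        push_cast
        ring

/-- If `A ∈ Γ(I)` has `y₀ = (tr A - 2)/2 ≠ 0`, then some real embedding `σⱼ` satisfies
`|tr(σⱼ(A))| ≥ N(I)^{2/n}/4 - 2`. -/
theorem stmt2 (K : Type*) [Field K] [NumberField K]
    (n : ℕ) (hn : n = Module.finrank ℚ K)
    (σ : Fin n ≃ (K →+* ℝ))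
    (I : Ideal (NumberField.RingOfIntegers K)) (hI : I ≠ ⊥)
    (A : SL(2, NumberField.RingOfIntegers K))
    (hA : A ∈ (Matrix.SpecialLinearGroup.map (Ideal.Quotient.mk I)).ker)
    (hy₀ : (algebraMap (NumberField.RingOfIntegers K) K (Matrix.trace A.1) - 2) / 2 ≠ 0) :
    ∃ j : Fin n,
      |Matrix.trace (A.1.map ((σ j).comp
          (algebraMap (NumberField.RingOfIntegers K) K)))| ≥
        (Ideal.absNorm I : ℝ) ^ ((2 : ℝ) / n) / 4 - 2 := by
  set O := NumberField.RingOfIntegers K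
  have hn0 : 0 < n := hn ▸ Module.finrank_pos
  -- entries of A modulo I
  rw [MonoidHom.mem_ker] at hA
  have hmat : A.1.map (Ideal.Quotient.mk I) = 1 := congrArg Subtype.val hA
  have hent : ∀ i j, Ideal.Quotient.mk I (A.1 i j) = (1 : Matrix (Fin 2) (Fin 2) (O ⧸ I)) i j :=
    fun i j => congrFun (congrFun hmat i) j
  have h00 : A.1 0 0 - 1 ∈ I := by
    have := hent 0 0
    rw [Matrix.one_apply_eq, ← map_one (Ideal.Quotient.mk I)] at this
    exact Ideal.Quotient.eq.mp this
  have h11 : A.1 1 1 - 1 ∈ I := by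
    have := hent 1 1
    rw [Matrix.one_apply_eq, ← map_one (Ideal.Quotient.mk I)] at this
    exact Ideal.Quotient.eq.mp this
  have h01 : A.1 0 1 ∈ I := by
    have := hent 0 1
    rw [Matrix.one_apply_ne (by decide)] at this
    exact Ideal.Quotient.eq_zero_iff_mem.mp this
  have h10 : A.1 1 0 ∈ I := by
    have := hent 1 0
    rw [Matrix.one_apply_ne (by decide)] at this
    exact Ideal.Quotient.eq_zero_iff_mem.mp this
  set x : O := Matrix.trace A.1 - 2 with hxdef
  have hdet : A.1 0 0 * A.1 1 1 - A.1 0 1 * A.1 1 0 = 1 := by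
    rw [← Matrix.det_fin_two]; exact A.2
  have key : x = A.1 0 1 * A.1 1 0 - (A.1 0 0 - 1) * (A.1 1 1 - 1) := by
    rw [hxdef, Matrix.trace_fin_two]
    linear_combination hdet
  have hxI2 : x ∈ I ^ 2 := by
    rw [key, pow_two]
    exact sub_mem (Ideal.mul_mem_mul h01 h10) (Ideal.mul_mem_mul h00 h11)
  have hx0 : x ≠ 0 := by
    intro h
    apply hy₀
    have htr : Matrix.trace A.1 = (2 : O) := by
      have := sub_eq_zero.mp h
      exact this
    rw [htr, map_ofNat]
    norm_num
  -- norm inequality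
  have hxK0 : algebraMap O K x ≠ 0 := by
    simpa using hx0
  have hspan_le : Ideal.span {x} ≤ I ^ 2 := (Ideal.span_singleton_le_iff_mem _).mpr hxI2
  have hdvd : Ideal.absNorm (I ^ 2) ∣ Ideal.absNorm (Ideal.span {x}) :=
    Ideal.absNorm_dvd_absNorm_of_le hspan_le
  have hspan_ne : Ideal.absNorm (Ideal.span {x}) ≠ 0 := by
    rw [Ne, Ideal.absNorm_eq_zero_iff, Ideal.span_singleton_eq_bot]
    exact hx0
  have hle : Ideal.absNorm I ^ 2 ≤ Ideal.absNorm (Ideal.span {x}) := by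
    rw [← map_pow]
    exact Nat.le_of_dvd (Nat.pos_of_ne_zero hspan_ne) hdvd
  have hle' : ((Ideal.absNorm I : ℚ)) ^ 2 ≤ |(Algebra.norm ℚ (algebraMap O K x) : ℚ)| := by
    rw [← Algebra.coe_norm_int x]
    calc ((Ideal.absNorm I : ℚ)) ^ 2 ≤ ((Ideal.absNorm (Ideal.span {x}) : ℚ)) := by
          exact_mod_cast hle
      _ = ((Algebra.norm ℤ x).natAbs : ℚ) := by rw [Ideal.absNorm_span_singleton]
      _ = |((Algebra.norm ℤ x : ℚ))| := by
          rw [← Int.cast_abs, Int.abs_eq_natAbs, Int.cast_natCast]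
  -- product of embeddings
  have hbij : Function.Bijective (fun φ : K →+* ℝ => (algebraMap ℝ ℂ).comp φ) := by
    rw [Fintype.bijective_iff_injective_and_card]
    constructor
    · intro φ₁ φ₂ h
      ext y
      have := congrArg (fun ψ : K →+* ℂ => ψ y) h
      simpa [Complex.ofReal_inj] using this
    · rw [NumberField.Embeddings.card K ℂ, ← hn, ← Fintype.card_fin n]
      exact Fintype.card_congr σ.symm
  have hprod : ∏ j : Fin n, |(σ j) (algebraMap O K x)| =
      |(Algebra.norm ℚ (algebraMap O K x) : ℚ)| := by
    calc ∏ j : Fin n, |(σ j) (algebraMap O K x)|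
        = ∏ φ : K →+* ℝ, |φ (algebraMap O K x)| :=
          Equiv.prod_comp σ (fun φ : K →+* ℝ => |φ (algebraMap O K x)|)
      _ = ∏ φ : K →+* ℝ, ‖((algebraMap ℝ ℂ).comp φ) (algebraMap O K x)‖ := by
          refine Finset.prod_congr rfl fun φ _ => ?_
          simp [Complex.norm_real]
      _ = ∏ ψ : K →+* ℂ, ‖ψ (algebraMap O K x)‖ :=
          Function.Bijective.prod_comp hbij
            (fun ψ : K →+* ℂ => ‖ψ (algebraMap O K x)‖)
      _ = |(Algebra.norm ℚ (algebraMap O K x) : ℚ)| := prod_abs_embeddings _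
  set c : ℝ := (Ideal.absNorm I : ℝ) ^ ((2 : ℝ) / n) with hcdef
  have hc0 : 0 ≤ c := Real.rpow_nonneg (by positivity) _
  have hcn : c ^ n = (Ideal.absNorm I : ℝ) ^ 2 := by
    rw [hcdef, ← Real.rpow_natCast ((Ideal.absNorm I : ℝ) ^ ((2 : ℝ) / n)) n,
      ← Real.rpow_mul (by positivity), div_mul_cancel₀, Real.rpow_two]
    exact_mod_cast hn0.ne'
  have hexists : ∃ j : Fin n, c ≤ |(σ j) (algebraMap O K x)| := by
    by_contra h
    push_neg at h
    have hpos : ∀ j : Fin n, 0 < |(σ j) (algebraMap O K x)| := fun j =>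
      abs_pos.mpr (map_ne_zero _ |>.mpr hxK0)
    have hlt : ∏ j : Fin n, |(σ j) (algebraMap O K x)| < c ^ n := by
      calc ∏ j : Fin n, |(σ j) (algebraMap O K x)| < ∏ _j : Fin n, c :=
            Finset.prod_lt_prod_of_nonempty (fun j _ => hpos j) (fun j _ => h j)
              (Finset.univ_nonempty_iff.mpr ⟨⟨0, hn0⟩⟩)
        _ = c ^ n := by rw [Finset.prod_const, Finset.card_univ, Fintype.card_fin]
    rw [hcn, hprod] at hlt
    have : ((Ideal.absNorm I : ℝ)) ^ 2 ≤ |(Algebra.norm ℚ (algebraMap O K x) : ℚ)| := by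
      exact_mod_cast hle'
    linarith
  obtain ⟨j, hj⟩ := hexists
  refine ⟨j, ?_⟩
  set f : O →+* ℝ := (σ j).comp (algebraMap O K) with hfdef
  have htrmap : Matrix.trace (A.1.map f) = (σ j) (algebraMap O K x) + 2 := by
    have h1 : Matrix.trace (A.1.map f) = f (Matrix.trace A.1) := by
      rw [Matrix.trace_fin_two]
      simp [Matrix.map_apply, Matrix.trace_fin_two, map_add]
    have h2 : Matrix.trace A.1 = x + 2 := by rw [hxdef]; ring
    rw [h1, h2, hfdef]
    simp [map_add, map_ofNat]
  rw [htrmap]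
  have habs : |(σ j) (algebraMap O K x)| - 2 ≤ |(σ j) (algebraMap O K x) + 2| := by
    have := abs_sub_abs_le_abs_sub ((σ j) (algebraMap O K x)) (-2)
    simpa using this
  have : c / 4 ≤ c := by linarith
  linarith
end

section
/- Let O be the ring of integers of a number field, I ⊆ O an ideal with N(I) > 2, and r the least positive rational integer in I. For distinct m, k ∈ {1, …, r}, the matrices A_m = (1−m², m; −m, 1) and A_k = (1−k², k; −k, 1) in SL₂(O) lie in distinct cosets of Γ(I). Consequently [SL₂(O) : Γ(I)] ≥ r ≥ N(I)^{1/n}, where n is the degree of the field. -/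
open Matrix MatrixGroups

section Aux

variable {R : Type*} [CommRing R]

/-- auxiliary SL2 matrix -/
def auxMat (m : R) : SL(2, R) :=
  ⟨!![1 - m ^ 2, m; -m, 1], by simp [Matrix.det_fin_two_of]; ring⟩

end Aux

set_option maxHeartbeats 1000000 in
set_option synthInstance.maxHeartbeats 400000 in
/-- For `N(I) > 2` and `r` the least positive rational integer in `I`, the matrices
`A_m = (1−m², m; −m, 1)`, `m = 1, …, r`, lie in pairwise distinct cosets of `Γ(I)`;
consequently `[SL₂(O) : Γ(I)] ≥ r ≥ N(I)^{1/n}`. -/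
theorem stmt11 (K : Type*) [Field K] [NumberField K]
    (n : ℕ) (hn : n = Module.finrank ℚ K)
    (I : Ideal (NumberField.RingOfIntegers K)) (hI : Ideal.absNorm I > 2)
    (r : ℕ) (hr : IsLeast {k : ℕ | 0 < k ∧ (k : NumberField.RingOfIntegers K) ∈ I} r) :
    (∀ m k : ℕ, m ∈ Finset.Icc 1 r → k ∈ Finset.Icc 1 r → m ≠ k →
      ∀ A B : SL(2, NumberField.RingOfIntegers K),
        A.1 = !![1 - (m : NumberField.RingOfIntegers K) ^ 2, (m : NumberField.RingOfIntegers K);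
                 -(m : NumberField.RingOfIntegers K), 1] →
        B.1 = !![1 - (k : NumberField.RingOfIntegers K) ^ 2, (k : NumberField.RingOfIntegers K);
                 -(k : NumberField.RingOfIntegers K), 1] →
        QuotientGroup.mk (s := (Matrix.SpecialLinearGroup.map (Ideal.Quotient.mk I)).ker) A ≠
          QuotientGroup.mk B) ∧
    (Matrix.SpecialLinearGroup.map (n := Fin 2) (Ideal.Quotient.mk I)).ker.index ≥ r ∧
    (r : ℝ) ≥ (Ideal.absNorm I : ℝ) ^ ((1 : ℝ) / n) := by
  have key : ∀ m k : ℕ, m ∈ Finset.Icc 1 r → k ∈ Finset.Icc 1 r → m ≠ k →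
      ∀ A B : SL(2, NumberField.RingOfIntegers K),
        A.1 = !![1 - (m : NumberField.RingOfIntegers K) ^ 2, (m : NumberField.RingOfIntegers K);
                 -(m : NumberField.RingOfIntegers K), 1] →
        B.1 = !![1 - (k : NumberField.RingOfIntegers K) ^ 2, (k : NumberField.RingOfIntegers K);
                 -(k : NumberField.RingOfIntegers K), 1] →
        QuotientGroup.mk (s := (Matrix.SpecialLinearGroup.map (Ideal.Quotient.mk I)).ker) A ≠
          QuotientGroup.mk B := by
    intro m k hm hk hmk A B hA hB h
    rw [QuotientGroup.eq] at h
    have hfAB : Matrix.SpecialLinearGroup.map (Ideal.Quotient.mk I) A =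
        Matrix.SpecialLinearGroup.map (Ideal.Quotient.mk I) B := by
      have h1 := MonoidHom.mem_ker.mp h
      rw [_root_.map_mul, _root_.map_inv, inv_mul_eq_one] at h1
      exact h1
    have hmat : A.1.map (Ideal.Quotient.mk I) = B.1.map (Ideal.Quotient.mk I) := by
      have := congrArg Subtype.val hfAB
      exact this
    have hentry : Ideal.Quotient.mk I ((m : NumberField.RingOfIntegers K)) =
        Ideal.Quotient.mk I ((k : NumberField.RingOfIntegers K)) := by
      have h2 := congrFun (congrFun hmat 0) 1
      rw [hA, hB] at h2
      simpa [Matrix.map_apply] using h2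
    have hsub : ((m : NumberField.RingOfIntegers K) - (k : NumberField.RingOfIntegers K)) ∈ I :=
      Ideal.Quotient.eq.mp hentry
    simp only [Finset.mem_Icc] at hm hk
    rcases lt_or_gt_of_ne hmk with hlt | hlt
    · have heq : ((k - m : ℕ) : NumberField.RingOfIntegers K) =
          -((m : NumberField.RingOfIntegers K) - (k : NumberField.RingOfIntegers K)) := by
        push_cast [Nat.cast_sub hlt.le]; ring
      have hd : ((k - m : ℕ) : NumberField.RingOfIntegers K) ∈ I := by
        rw [heq]; exact I.neg_mem hsub
      have := hr.2 ⟨by omega, hd⟩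
      omega
    · have heq : ((m - k : ℕ) : NumberField.RingOfIntegers K) =
          (m : NumberField.RingOfIntegers K) - (k : NumberField.RingOfIntegers K) := by
        push_cast [Nat.cast_sub hlt.le]; ring
      have hd : ((m - k : ℕ) : NumberField.RingOfIntegers K) ∈ I := by
        rw [heq]; exact hsub
      have := hr.2 ⟨by omega, hd⟩
      omega
  refine ⟨key, ?_, ?_⟩
  · -- index ≥ r
    have hfin0 : Finite (NumberField.RingOfIntegers K ⧸ I) :=
      (Ideal.absNorm_ne_zero_iff I).mp (by omega)
    have hfin1 : Finite (SL(2, NumberField.RingOfIntegers K ⧸ I)) :=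
      Finite.of_injective
        (fun g => (g : Matrix (Fin 2) (Fin 2) (NumberField.RingOfIntegers K ⧸ I)))
        fun a b hab => Subtype.ext hab
    have hfin : Finite (SL(2, NumberField.RingOfIntegers K) ⧸
        (Matrix.SpecialLinearGroup.map (n := Fin 2) (Ideal.Quotient.mk I)).ker) :=
      Finite.of_equiv _ (QuotientGroup.quotientKerEquivRange
        (Matrix.SpecialLinearGroup.map (n := Fin 2) (Ideal.Quotient.mk I))).symm.toEquiv
    haveI : Fintype (SL(2, NumberField.RingOfIntegers K) ⧸
        (Matrix.SpecialLinearGroup.map (n := Fin 2) (Ideal.Quotient.mk I)).ker) :=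
      Fintype.ofFinite _
    have hcard : (Finset.Icc 1 r).card ≤ Fintype.card (SL(2, NumberField.RingOfIntegers K) ⧸
        (Matrix.SpecialLinearGroup.map (n := Fin 2) (Ideal.Quotient.mk I)).ker) :=
      Finset.card_le_card_of_injOn
        (fun m => QuotientGroup.mk (auxMat ((m : NumberField.RingOfIntegers K))))
        (fun _ _ => Finset.mem_univ _)
        (fun m hm k hk h => by
          by_contra hmk
          exact key m k hm hk hmk _ _ rfl rfl h)
    have hidx : (Matrix.SpecialLinearGroup.map (n := Fin 2) (Ideal.Quotient.mk I)).ker.index =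
        Fintype.card (SL(2, NumberField.RingOfIntegers K) ⧸
          (Matrix.SpecialLinearGroup.map (n := Fin 2) (Ideal.Quotient.mk I)).ker) := by
      rw [Subgroup.index, Nat.card_eq_fintype_card]
    simp only [Nat.card_Icc] at hcard
    omega
  · -- r ≥ N(I)^{1/n}
    have hn0 : 0 < n := by rw [hn]; exact Module.finrank_pos
    have hr0 : 0 < r := hr.1.1
    have hle : Ideal.span {(r : NumberField.RingOfIntegers K)} ≤ I := by
      rw [Ideal.span_singleton_le_iff_mem]; exact hr.1.2
    have hdvd : Ideal.absNorm I ∣ Ideal.absNorm (Ideal.span {(r : NumberField.RingOfIntegers K)}) :=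
      Ideal.absNorm_dvd_absNorm_of_le hle
    have hnorm : Ideal.absNorm (Ideal.span {(r : NumberField.RingOfIntegers K)}) = r ^ n := by
      rw [Ideal.absNorm_span_singleton]
      have hcast : ((r : ℕ) : NumberField.RingOfIntegers K) =
          algebraMap ℤ (NumberField.RingOfIntegers K) (r : ℤ) := by push_cast; rfl
      rw [hcast, Algebra.norm_algebraMap_of_basis
        (Module.Free.chooseBasis ℤ (NumberField.RingOfIntegers K))]
      rw [← Module.finrank_eq_card_chooseBasisIndex, NumberField.RingOfIntegers.rank, ← hn]
      simp [Int.natAbs_pow]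
    have hNle : Ideal.absNorm I ≤ r ^ n := by
      rw [hnorm] at hdvd
      exact Nat.le_of_dvd (pow_pos hr0 n) hdvd
    have hNleR : (Ideal.absNorm I : ℝ) ≤ (r : ℝ) ^ (n : ℕ) := by exact_mod_cast hNle
    calc (Ideal.absNorm I : ℝ) ^ ((1 : ℝ) / n)
        ≤ ((r : ℝ) ^ (n : ℕ)) ^ ((1 : ℝ) / n) :=
          Real.rpow_le_rpow (by positivity) hNleR (by positivity)
      _ = (r : ℝ) ^ ((n : ℝ) * ((1 : ℝ) / n)) := by
          rw [← Real.rpow_natCast (r : ℝ) n, ← Real.rpow_mul (by positivity)]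
      _ = r := by
          rw [mul_one_div, div_self (by exact_mod_cast hn0.ne'), Real.rpow_one]
end

section
/- Let K be a totally real number field of degree n with real embeddings σ₁,…,σₙ, O its ring of integers, and I an ideal with N(I) ≥ 40^{n/2}. Let A ∈ Γ(I) ⊆ SL₂(O) with y₀ = (tr(A)−2)/2 ≠ 0, and suppose |tr(σᵢ(A))| ≥ 8 for all i = 1,…,n. Then for every z = (z₁,…,zₙ) ∈ (ℍ²)ⁿ, the product distance satisfies d(z, Az) = √(Σᵢ d_{ℍ²}(zᵢ, σᵢ(A)zᵢ)²) ≥ (4/√n)·log(N(I)) − 2√n·log(8). -/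
open Matrix MatrixGroups

lemma complex_re_im_div (a b c d x y : ℝ) (hs : (c*x+d)^2 + (c*y)^2 ≠ 0) :
    ((((a:ℂ) * (x + y*Complex.I) + b) / ((c:ℂ) * (x + y*Complex.I) + d)).re
      = ((a*x+b)*(c*x+d) + a*c*y^2)/((c*x+d)^2 + (c*y)^2)) ∧
    ((((a:ℂ) * (x + y*Complex.I) + b) / ((c:ℂ) * (x + y*Complex.I) + d)).im
      = (a*d - b*c)*y/((c*x+d)^2 + (c*y)^2)) := by
  have hn : Complex.normSq ((c:ℂ) * (x + y*Complex.I) + d) = (c*x+d)^2 + (c*y)^2 := by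
    simp [Complex.normSq_apply, Complex.add_re, Complex.add_im, Complex.mul_re, Complex.mul_im]
    ring
  constructor
  · rw [Complex.div_re, hn]
    simp [Complex.add_re, Complex.add_im, Complex.mul_re, Complex.mul_im]
    field_simp
  · rw [Complex.div_im, hn]
    simp [Complex.add_re, Complex.add_im, Complex.mul_re, Complex.mul_im]
    field_simp
    ring

open UpperHalfPlane in
lemma hyp_dist_ge (g : SL(2, ℝ)) (z : UpperHalfPlane)
    (ht : |Matrix.trace g.1| ≥ 8) :
    dist z (g • z) ≥ 2 * Real.log (|Matrix.trace g.1| - 1) := by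
  obtain ⟨a, b, c, d, hdet', hg⟩ : ∃ a b c d : ℝ,
      a * d - b * c = 1 ∧ g.1 = !![a, b; c, d] := by
    refine ⟨g.1 0 0, g.1 0 1, g.1 1 0, g.1 1 1, ?_, ?_⟩
    · have := g.2; rwa [Matrix.det_fin_two] at this
    · exact (Matrix.etaExpand_eq g.1).symm
  have htr : Matrix.trace g.1 = a + d := by rw [hg, Matrix.trace_fin_two_of]
  set t : ℝ := |Matrix.trace g.1| with htdef
  have ht8 : (8:ℝ) ≤ t := ht
  have ht2 : t^2 = (a+d)^2 := by rw [htdef, htr, sq_abs]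
  have hy : 0 < z.im := z.im_pos
  set w := g • z with hwdef
  have hw : (w : ℂ) = ((a : ℂ) * (z:ℂ) + b) / ((c : ℂ) * (z:ℂ) + d) := by
    rw [hwdef, UpperHalfPlane.specialLinearGroup_apply]
    simp [hg]
  have hzc : (z : ℂ) = (z.re : ℝ) + (z.im : ℝ)*Complex.I := by
    rw [Complex.ext_iff]; simp
  set x : ℝ := z.re with hxdef
  set y : ℝ := z.im with hydef
  set s : ℝ := (c * x + d) ^ 2 + (c * y) ^ 2 with hsdef
  have hs : 0 < s := by
    rcases eq_or_ne c 0 with hc | hc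
    · have hd : d ≠ 0 := by intro h0; rw [hc, h0] at hdet'; simp at hdet'
      have : s = d ^ 2 := by rw [hsdef, hc]; ring
      rw [this]; positivity
    · have h1 : 0 < (c * y)^2 := by positivity
      nlinarith [sq_nonneg (c*x+d)]
  have hrei := complex_re_im_div a b c d x y hs.ne'
  have hre : w.re = ((a*x+b)*(c*x+d) + a*c*y^2)/s := by
    rw [← UpperHalfPlane.coe_re, hw, hzc, hrei.1]
  have him : w.im = y/s := by
    rw [← UpperHalfPlane.coe_im, hw, hzc, hrei.2, hdet', one_mul]
  have hwim : 0 < w.im := w.im_pos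
  -- cosh bound
  have hcosh : t^2/2 - 1 ≤ Real.cosh (dist z w) := by
    rw [UpperHalfPlane.cosh_dist', le_div_iff₀ (by positivity)]
    rw [hre, him, ← hxdef, ← hydef, ← sub_nonneg]
    have e2 : (x*s - ((a*x+b)*(c*x+d) + a*c*y^2))^2 + y^2*s^2 + y^2
        - ((a+d)^2-2)*(y^2*s) = s*(c*(x^2+y^2) + (d-a)*x - b)^2 := by
      rw [hsdef]
      linear_combination (y^2*(-1 - 2*d^2 - 4*c*d*x - 2*c^2*y^2 - 2*c^2*x^2 + b*c - a*d)) * hdet'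
    have e1 : (x - ((a*x+b)*(c*x+d) + a*c*y^2)/s)^2 + y^2 + (y/s)^2
        - (t^2/2 - 1)*(2 * y * (y/s))
        = ((x*s - ((a*x+b)*(c*x+d) + a*c*y^2))^2 + y^2*s^2 + y^2
            - ((a+d)^2-2)*(y^2*s))/s^2 := by
      rw [ht2]; field_simp
    rw [e1, e2]
    positivity
  have h1 : (0:ℝ) < t - 1 := by linarith
  have hlog : Real.cosh (2 * Real.log (t - 1)) ≤ t^2/2 - 1 := by
    rw [show 2 * Real.log (t-1) = Real.log ((t-1)^2) by
        rw [Real.log_pow]; push_cast; ring,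
      Real.cosh_eq, Real.exp_log (by positivity), Real.exp_neg,
      Real.exp_log (by positivity)]
    have hinv : ((t-1)^2)⁻¹ ≤ 1 := by
      rw [inv_le_one_iff₀]; right; nlinarith
    nlinarith
  have hmono : |2 * Real.log (t-1)| ≤ |dist z w| :=
    Real.cosh_le_cosh.mp (le_trans hlog hcosh)
  have hln : 0 ≤ Real.log (t-1) := Real.log_nonneg (by linarith)
  calc 2 * Real.log (t-1) = |2 * Real.log (t-1)| := (abs_of_nonneg (by linarith)).symm
    _ ≤ |dist z w| := hmono
    _ = dist z w := abs_of_nonneg dist_nonneg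

open NumberField in
lemma norm_prod_ge (K : Type*) [Field K] [NumberField K]
    (n : ℕ) (hn : n = Module.finrank ℚ K) (σ : Fin n ≃ (K →+* ℝ))
    (I : Ideal (RingOfIntegers K)) (x : RingOfIntegers K) (hx : x ≠ 0)
    (hxI : x ∈ I ^ 2) :
    ((Ideal.absNorm I : ℝ)) ^ 2 ≤ ∏ i, |(σ i) (algebraMap (RingOfIntegers K) K x)| := by
  have hdvd : Ideal.absNorm (I ^ 2) ∣ Ideal.absNorm (Ideal.span {x}) :=
    Ideal.absNorm_dvd_absNorm_of_le ((Ideal.span_singleton_le_iff_mem _).mpr hxI)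
  rw [map_pow, Ideal.absNorm_span_singleton] at hdvd
  have hnz : (Algebra.norm ℤ x).natAbs ≠ 0 :=
    Int.natAbs_ne_zero.mpr (Algebra.norm_ne_zero_iff.mpr hx)
  have hle : Ideal.absNorm I ^ 2 ≤ (Algebra.norm ℤ x).natAbs :=
    Nat.le_of_dvd (Nat.pos_of_ne_zero hnz) hdvd
  set xK : K := algebraMap (RingOfIntegers K) K x with hxK
  have heq : ∏ i, |(σ i) xK| = |((Algebra.norm ℤ x : ℤ) : ℝ)| := by
    have h1 : algebraMap ℚ ℂ (Algebra.norm ℚ xK) = ∏ φ : K →ₐ[ℚ] ℂ, φ xK :=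
      Algebra.norm_eq_prod_embeddings ℚ ℂ xK
    have h2 : |((Algebra.norm ℚ xK : ℚ) : ℝ)| = ∏ φ : K →+* ℂ, ‖φ xK‖ := by
      have := congrArg (fun w : ℂ => ‖w‖) h1
      rw [norm_prod] at this
      rw [Fintype.prod_equiv (RingHom.equivRatAlgHom K ℂ) (fun f => ‖f xK‖)
        (fun φ => ‖φ xK‖) fun _ => by simp [RingHom.equivRatAlgHom_apply]]
      rw [← this]
      rw [show algebraMap ℚ ℂ (Algebra.norm ℚ xK) = (((Algebra.norm ℚ xK : ℚ) : ℝ) : ℂ) by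
        push_cast; norm_cast]
      rw [Complex.norm_real, Real.norm_eq_abs]
    have hcard : Fintype.card (K →+* ℝ) = Fintype.card (K →+* ℂ) := by
      rw [NumberField.Embeddings.card K ℂ, ← hn, Fintype.card_congr σ.symm, Fintype.card_fin]
    have hinj : Function.Injective
        (fun τ : K →+* ℝ => (Complex.ofRealHom.comp τ : K →+* ℂ)) := by
      intro τ₁ τ₂ h
      ext k
      exact Complex.ofReal_injective (RingHom.congr_fun h k)
    have hbij := (Fintype.bijective_iff_injective_and_card _).mpr ⟨hinj, hcard⟩
    have h3 : ∏ τ : K →+* ℝ, |τ xK| = ∏ φ : K →+* ℂ, ‖φ xK‖ :=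
      Fintype.prod_bijective _ hbij _ _ (fun τ => by
        simp [Complex.norm_real])
    have h4 : ∏ i, |(σ i) xK| = ∏ τ : K →+* ℝ, |τ xK| :=
      Equiv.prod_comp σ (fun τ => |τ xK|)
    have h5 : Algebra.norm ℚ xK = ((Algebra.norm ℤ x : ℤ) : ℚ) := by
      rw [hxK, ← NumberField.RingOfIntegers.coe_eq_algebraMap, ← Algebra.coe_norm_int]
    rw [h4, h3, ← h2, h5]
    norm_cast
  rw [heq]
  have h6 : (((Algebra.norm ℤ x).natAbs : ℕ) : ℝ) = |((Algebra.norm ℤ x : ℤ) : ℝ)| := by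
    rw [Nat.cast_natAbs, Int.cast_abs]
  rw [← h6]
  calc ((Ideal.absNorm I : ℝ)) ^ 2 = ((Ideal.absNorm I ^ 2 : ℕ) : ℝ) := by push_cast; ring
    _ ≤ (((Algebra.norm ℤ x).natAbs : ℕ) : ℝ) := by exact_mod_cast hle

set_option synthInstance.maxHeartbeats 1000000 in
set_option maxHeartbeats 1000000 in
open NumberField in
/-- If `N(I) ≥ 40^{n/2}` and `A ∈ Γ(I)` has `y₀ = (tr A − 2)/2 ≠ 0`, then for every
`z ∈ (ℍ²)ⁿ`, `d(z, Az) ≥ (4/√n) log N(I) − 2√n log 8`. -/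
theorem stmt15 (K : Type*) [Field K] [NumberField K]
    (n : ℕ) (hn : n = Module.finrank ℚ K)
    (σ : Fin n ≃ (K →+* ℝ))
    (I : Ideal (NumberField.RingOfIntegers K))
    (hI : (Ideal.absNorm I : ℝ) ≥ 40 ^ ((n : ℝ) / 2))
    (A : SL(2, NumberField.RingOfIntegers K))
    (hA : A ∈ (Matrix.SpecialLinearGroup.map (Ideal.Quotient.mk I)).ker)
    (hy₀ : (algebraMap (NumberField.RingOfIntegers K) K (Matrix.trace A.1) - 2) / 2 ≠ 0)
    (htr : ∀ i : Fin n,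
      |Matrix.trace (A.1.map ((σ i).comp
        (algebraMap (NumberField.RingOfIntegers K) K)))| ≥ 8) :
    ∀ z : Fin n → UpperHalfPlane,
      Real.sqrt (∑ i, (dist (z i)
          ((Matrix.SpecialLinearGroup.map
            ((σ i).comp (algebraMap (NumberField.RingOfIntegers K) K)) A) • z i)) ^ 2) ≥
        (4 / Real.sqrt n) * Real.log (Ideal.absNorm I) - 2 * Real.sqrt n * Real.log 8 := by
  intro z
  have hn0 : 0 < n := hn ▸ Module.finrank_pos
  set O := NumberField.RingOfIntegers K
  -- the element x = tr A - 2 belongs to I^2 and is nonzero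
  set x : O := Matrix.trace A.1 - 2 with hxdef
  have hA1 : Matrix.SpecialLinearGroup.map (Ideal.Quotient.mk I) A = 1 :=
    MonoidHom.mem_ker.mp hA
  have hent : ∀ i j, Ideal.Quotient.mk I (A.1 i j)
      = (1 : Matrix (Fin 2) (Fin 2) (O ⧸ I)) i j := by
    intro i j
    have h := congrArg (fun B : SL(2, O ⧸ I) => B.1 i j) hA1
    simpa [Matrix.SpecialLinearGroup.map_apply_coe, RingHom.mapMatrix_apply, Matrix.map_apply] using h
  have hb : A.1 0 1 ∈ I := by
    have := hent 0 1
    rw [Matrix.one_apply_ne (show (0:Fin 2) ≠ 1 by decide)] at this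
    exact Ideal.Quotient.eq_zero_iff_mem.mp this
  have hc : A.1 1 0 ∈ I := by
    have := hent 1 0
    rw [Matrix.one_apply_ne (show (1:Fin 2) ≠ 0 by decide)] at this
    exact Ideal.Quotient.eq_zero_iff_mem.mp this
  have ha : A.1 0 0 - 1 ∈ I := by
    have := hent 0 0
    rw [Matrix.one_apply_eq] at this
    exact Ideal.Quotient.eq_zero_iff_mem.mp (by rw [_root_.map_sub, this, _root_.map_one, sub_self])
  have hd : A.1 1 1 - 1 ∈ I := by
    have := hent 1 1
    rw [Matrix.one_apply_eq] at this
    exact Ideal.Quotient.eq_zero_iff_mem.mp (by rw [_root_.map_sub, this, _root_.map_one, sub_self])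
  have hdet : A.1 0 0 * A.1 1 1 - A.1 0 1 * A.1 1 0 = 1 := by
    have := A.2; rwa [Matrix.det_fin_two] at this
  have htrA : Matrix.trace A.1 = A.1 0 0 + A.1 1 1 := Matrix.trace_fin_two A.1
  have hxI2 : x ∈ I ^ 2 := by
    have hmem : A.1 0 1 * A.1 1 0 - (A.1 0 0 - 1) * (A.1 1 1 - 1) ∈ I * I :=
      sub_mem (Ideal.mul_mem_mul hb hc) (Ideal.mul_mem_mul ha hd)
    have hx2 : x = A.1 0 1 * A.1 1 0 - (A.1 0 0 - 1) * (A.1 1 1 - 1) := by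
      rw [hxdef, htrA]; linear_combination hdet
    rw [sq, hx2]; exact hmem
  have hx0 : x ≠ 0 := by
    intro h0
    apply hy₀
    have h2 : Matrix.trace A.1 = 2 := by
      have := sub_eq_zero.mp (hxdef ▸ h0)
      exact this
    rw [h2, map_ofNat]
    norm_num
  -- the norm bound
  have hnorm := norm_prod_ge K n hn σ I x hx0 hxI2
  set N : ℕ := Ideal.absNorm I with hNdef
  have hN1 : (1 : ℝ) ≤ (N : ℝ) := by
    refine le_trans ?_ hI
    exact Real.one_le_rpow (by norm_num) (by positivity)
  -- distances
  set xK : K := algebraMap O K x with hxKdef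
  set d : Fin n → ℝ := fun i => dist (z i)
      ((Matrix.SpecialLinearGroup.map
        ((σ i).comp (algebraMap O K)) A) • z i) with hddef
  have hd_nonneg : ∀ i, 0 ≤ d i := fun i => dist_nonneg
  have habs : ∀ i, 6 ≤ |(σ i) xK| ∧ |(σ i) xK| ≤ 2 * (|Matrix.trace (A.1.map ((σ i).comp
        (algebraMap O K)))| - 1) := by
    intro i
    set f := (σ i).comp (algebraMap O K)
    have htf : Matrix.trace (A.1.map f) = f (Matrix.trace A.1) := by
      rw [htrA, Matrix.trace_fin_two, Matrix.map_apply, Matrix.map_apply, map_add]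
    have hxKf : (σ i) xK = f (Matrix.trace A.1) - 2 := by
      rw [hxKdef, hxdef]
      show f (Matrix.trace A.1 - 2) = _
      rw [map_sub, map_ofNat]
    have h8 : 8 ≤ |f (Matrix.trace A.1)| := htf ▸ htr i
    constructor
    · rw [hxKf]
      cases abs_cases (f (Matrix.trace A.1)) with
      | inl h => rw [abs_of_nonneg (by linarith [h.1, h8, abs_nonneg (f (Matrix.trace A.1))])]
                 nlinarith [h.1, h.2, h8]
      | inr h => rw [abs_of_nonpos (by nlinarith [h.1, h.2, h8])]
                 nlinarith [h.1, h.2, h8]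
    · rw [htf, hxKf]
      calc |f (Matrix.trace A.1) - 2| ≤ |f (Matrix.trace A.1)| + |(2:ℝ)| := abs_sub _ _
        _ ≤ 2 * (|f (Matrix.trace A.1)| - 1) := by
            rw [abs_of_nonneg (by norm_num : (0:ℝ) ≤ 2)]; linarith
  have hdist : ∀ i, d i ≥ 2 * Real.log (|(σ i) xK|) - 2 * Real.log 2 := by
    intro i
    set f := (σ i).comp (algebraMap O K)
    have h1 := hyp_dist_ge (Matrix.SpecialLinearGroup.map f A) (z i) (by
      rw [Matrix.SpecialLinearGroup.map_apply_coe, RingHom.mapMatrix_apply]; exact htr i)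
    have htrmap : Matrix.trace ((Matrix.SpecialLinearGroup.map f A).1)
        = Matrix.trace (A.1.map f) := by
      simp [Matrix.SpecialLinearGroup.map_apply_coe, RingHom.mapMatrix_apply]
    rw [htrmap] at h1
    have ⟨h6, hle2⟩ := habs i
    have hlog : Real.log (|(σ i) xK|) - Real.log 2 ≤ Real.log (|Matrix.trace (A.1.map f)| - 1) := by
      rw [← Real.log_div (by linarith) (by norm_num)]
      apply Real.log_le_log (by positivity)
      linarith
    calc 2 * Real.log (|(σ i) xK|) - 2 * Real.log 2
        = 2 * (Real.log (|(σ i) xK|) - Real.log 2) := by ring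
      _ ≤ 2 * Real.log (|Matrix.trace (A.1.map f)| - 1) := by linarith
      _ ≤ d i := h1
  -- sum of logs
  have hlogprod : ∑ i, Real.log (|(σ i) xK|) ≥ 2 * Real.log N := by
    have hpos : ∀ i ∈ Finset.univ, |(σ i) xK| ≠ 0 := fun i _ => by
      have := (habs i).1; positivity
    rw [← Real.log_prod hpos]
    have hup : ((N:ℝ))^2 ≤ ∏ i, |(σ i) xK| := hnorm
    calc 2 * Real.log N = Real.log ((N:ℝ)^2) := by
          rw [Real.log_pow]; push_cast; ring
      _ ≤ Real.log (∏ i, |(σ i) xK|) := Real.log_le_log (by positivity) hup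
  have hsum : ∑ i, d i ≥ 4 * Real.log N - 2 * n * Real.log 2 := by
    calc ∑ i, d i ≥ ∑ i, (2 * Real.log (|(σ i) xK|) - 2 * Real.log 2) :=
          Finset.sum_le_sum (fun i _ => hdist i)
      _ = 2 * (∑ i, Real.log (|(σ i) xK|)) - 2 * n * Real.log 2 := by
          rw [Finset.sum_sub_distrib, ← Finset.mul_sum, Finset.sum_const, Finset.card_univ,
            Fintype.card_fin]; push_cast; ring
      _ ≥ 4 * Real.log N - 2 * n * Real.log 2 := by linarith [hlogprod]
  -- Cauchy-Schwarz
  have hcs : (∑ i, d i) ^ 2 ≤ (n : ℝ) * ∑ i, (d i) ^ 2 := by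
    have := sq_sum_le_card_mul_sum_sq (s := Finset.univ) (f := d)
    simpa [Finset.card_univ, Fintype.card_fin] using this
  have hsn : (0:ℝ) < Real.sqrt n := Real.sqrt_pos.mpr (by exact_mod_cast hn0)
  have hsum_nonneg : 0 ≤ ∑ i, d i := Finset.sum_nonneg (fun i _ => hd_nonneg i)
  have hsqrt : Real.sqrt (∑ i, (d i) ^ 2) ≥ (∑ i, d i) / Real.sqrt n := by
    apply Real.le_sqrt_of_sq_le
    rw [div_pow, Real.sq_sqrt (by positivity : (0:ℝ) ≤ (n:ℝ)),
      div_le_iff₀ (by exact_mod_cast hn0 : (0:ℝ) < (n:ℝ))]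
    calc (∑ i, d i)^2 ≤ (n:ℝ) * ∑ i, (d i)^2 := hcs
      _ = (∑ i, (d i)^2) * n := by ring
  -- final arithmetic
  have hfin : (4 * Real.log N - 2 * n * Real.log 2) / Real.sqrt n
      ≥ (4 / Real.sqrt n) * Real.log N - 2 * Real.sqrt n * Real.log 8 := by
    have hnn : (n : ℝ) = Real.sqrt n * Real.sqrt n := (Real.mul_self_sqrt (by positivity)).symm
    have hlog28 : Real.log 2 ≤ Real.log 8 := Real.log_le_log (by norm_num) (by norm_num)
    have heq : (4 * Real.log N - 2 * n * Real.log 2) / Real.sqrt n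
        = (4 / Real.sqrt n) * Real.log N - 2 * Real.sqrt n * Real.log 2 := by
      rw [sub_div]
      congr 1
      · ring
      · calc (2*(n:ℝ)*Real.log 2)/Real.sqrt (n:ℝ)
            = 2*Real.log 2 * ((n:ℝ)/Real.sqrt (n:ℝ)) := by ring
          _ = 2*Real.log 2*Real.sqrt (n:ℝ) := by rw [Real.div_sqrt]
          _ = 2*Real.sqrt (n:ℝ)*Real.log 2 := by ring
    rw [heq]
    have : 2 * Real.sqrt n * Real.log 2 ≤ 2 * Real.sqrt n * Real.log 8 := by
      apply mul_le_mul_of_nonneg_left hlog28 (by positivity)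
    linarith
  calc Real.sqrt (∑ i, (d i) ^ 2) ≥ (∑ i, d i) / Real.sqrt n := hsqrt
    _ ≥ (4 * Real.log N - 2 * n * Real.log 2) / Real.sqrt n := by
        gcongr
    _ ≥ _ := hfin
end

section
/- Let K be a totally real number field of degree n with real embeddings σ₁,…,σₙ, O its ring of integers, and I ⊆ O an ideal with N(I) ≥ 40^{n/2}. Let A ∈ Γ(I) with y₀ = (tr(A)−2)/2 ≠ 0. Then for every z ∈ (ℍ²)ⁿ, d(z, Az) ≥ (4/√n)·log(N(I)) − 2√n·log(40). -/
set_option maxHeartbeats 1000000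
set_option synthInstance.maxHeartbeats 400000

open Matrix MatrixGroups NumberField

section Aux
open UpperHalfPlane


lemma aux_trace_dist (g : SL(2, ℝ)) (z : UpperHalfPlane)
    (h : 2 ≤ |Matrix.trace g.1|) :
    2 * Real.log (|Matrix.trace g.1| - 1) ≤ dist z (g • z) := by
  set a : ℝ := g.1 0 0 with ha
  set b : ℝ := g.1 0 1 with hb
  set c : ℝ := g.1 1 0 with hc
  set d : ℝ := g.1 1 1 with hd
  have hdet : a * d - b * c = 1 := by
    have := g.2
    rwa [Matrix.det_fin_two] at this
  have ht : Matrix.trace g.1 = a + d := Matrix.trace_fin_two g.1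
  set t : ℝ := a + d with htt
  rw [ht] at h ⊢
  set x : ℝ := (z : ℂ).re with hx
  set y : ℝ := z.im with hy
  have hy0 : 0 < y := z.im_pos
  have hyc : (z : ℂ).im = y := z.coe_im
  set D : ℂ := (c : ℂ) * z + d with hD
  have hDne : D ≠ 0 := by
    have hcd : ![c, d] ≠ 0 := by
      intro h0
      have hc0 : c = 0 := by simpa using congrFun h0 0
      have hd0 : d = 0 := by simpa using congrFun h0 1
      rw [hc0, hd0] at hdet
      norm_num at hdet
    simpa using UpperHalfPlane.linear_ne_zero (cd := ![c, d]) z hcd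
  have habsD : 0 < ‖D‖ := by
    simpa [norm_pos_iff] using hDne
  have hw : (↑(g • z) : ℂ) = ((a : ℂ) * z + b) / D := by
    rw [UpperHalfPlane.specialLinearGroup_apply]
    simp [ha, hb, hc, hd, hD]
  set P : ℂ := (c : ℂ) * (z : ℂ) ^ 2 + ((d : ℂ) - a) * z - b with hP
  have him : (↑(g • z) : ℂ).im = y / Complex.normSq D := by
    rw [hw, Complex.div_im, ← sub_div]
    congr 1
    simp only [hD, Complex.add_im, Complex.add_re, Complex.mul_im, Complex.mul_re,
      Complex.ofReal_re, Complex.ofReal_im, hyc, ← hx]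
    ring_nf
    linear_combination y * hdet
  have hgim : (g • z).im = y / Complex.normSq D := by
    rw [← UpperHalfPlane.coe_im, him]
  have hdistc : dist (z : ℂ) (↑(g • z) : ℂ) = ‖P‖ / ‖D‖ := by
    rw [Complex.dist_eq, hw, show (z : ℂ) - ((a : ℂ) * z + b) / D = P / D by
      field_simp [hD]; ring, norm_div]
  have hsqrt : Real.sqrt (z.im * (g • z).im) = y / ‖D‖ := by
    rw [hgim, ← hy, show y * (y / Complex.normSq D) = (y / ‖D‖) ^ 2 by
      rw [← Complex.sq_norm]; field_simp]
    exact Real.sqrt_sq (by positivity)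
  set S : ℝ := ‖P‖ / (2 * y) with hS
  have hdeq : dist z (g • z) = 2 * Real.arsinh S := by
    rw [UpperHalfPlane.dist_eq, hdistc, hsqrt, hS]
    congr 2
    field_simp [habsD.ne', hy0.ne']
  have h4 : 0 ≤ t ^ 2 - 4 := by nlinarith [sq_abs t, h, abs_nonneg t]
  have hPre : P.re = c * (x ^ 2 - y ^ 2) + (d - a) * x - b := by
    simp only [hP, pow_two, Complex.sub_re, Complex.add_re, Complex.mul_re, Complex.mul_im,
      Complex.ofReal_re, Complex.ofReal_im, Complex.sub_im, hyc, ← hx]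
    ring
  have hPim : P.im = 2 * c * x * y + (d - a) * y := by
    simp only [hP, pow_two, Complex.sub_im, Complex.add_im, Complex.mul_re, Complex.mul_im,
      Complex.ofReal_re, Complex.ofReal_im, Complex.sub_re, hyc, ← hx]
    ring
  have hP2 : (t ^ 2 - 4) * y ^ 2 ≤ Complex.normSq P := by
    rw [Complex.normSq_apply, hPre, hPim]
    have hge : (c * (x ^ 2 - y ^ 2) + (d - a) * x - b) ^ 2 + (2 * c * x * y + (d - a) * y) ^ 2
        - (t ^ 2 - 4) * y ^ 2
        = (c * (x ^ 2 - y ^ 2) + (d - a) * x - b + 2 * c * y ^ 2) ^ 2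
          - 4 * y ^ 2 * (a * d - b * c - 1) := by rw [htt]; ring
    nlinarith [hge, hdet, sq_nonneg (c * (x ^ 2 - y ^ 2) + (d - a) * x - b + 2 * c * y ^ 2)]
  have habsP : Real.sqrt (t ^ 2 - 4) * y ≤ ‖P‖ := by
    calc Real.sqrt (t ^ 2 - 4) * y = Real.sqrt ((t ^ 2 - 4) * y ^ 2) := by
          rw [Real.sqrt_mul h4, Real.sqrt_sq hy0.le]
      _ ≤ Real.sqrt (Complex.normSq P) := Real.sqrt_le_sqrt hP2
      _ = ‖P‖ := by rw [Complex.norm_def]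
  have hsqrtS : Real.sqrt (t ^ 2 - 4) / 2 ≤ S := by
    rw [hS, div_le_div_iff₀ (by norm_num) (by positivity)]
    nlinarith [habsP]
  have hS0 : 0 ≤ S := by positivity
  have hSsq : (t ^ 2 - 4) / 4 ≤ S ^ 2 := by
    have h2 := pow_le_pow_left₀ (by positivity) hsqrtS 2
    rw [div_pow, Real.sq_sqrt h4] at h2
    linarith
  have h5 : |t| / 2 ≤ Real.sqrt (1 + S ^ 2) := by
    have h6 : (|t| / 2) ^ 2 ≤ 1 + S ^ 2 := by
      rw [div_pow, sq_abs]; linarith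
    calc |t| / 2 = Real.sqrt ((|t| / 2) ^ 2) := (Real.sqrt_sq (by positivity)).symm
      _ ≤ Real.sqrt (1 + S ^ 2) := Real.sqrt_le_sqrt h6
  have h6 : (|t| - 2) / 2 ≤ S := by
    have h7 : |t| - 2 ≤ Real.sqrt (t ^ 2 - 4) := by
      apply Real.le_sqrt_of_sq_le
      nlinarith [sq_abs t]
    linarith
  rw [hdeq]
  have harsinh : Real.log (|t| - 1) ≤ Real.arsinh S := by
    rw [Real.arsinh]
    apply Real.log_le_log (by linarith)
    linarith
  linarith



lemma aux_prod_embeddings {K : Type*} [Field K] [NumberField K]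
    {n : ℕ} (hn : n = Module.finrank ℚ K) (σ : Fin n ≃ (K →+* ℝ)) (x : K) :
    ∏ i, |σ i x| = |((Algebra.norm ℚ x : ℚ) : ℝ)| := by
  set f : (K →+* ℝ) → (K →+* ℂ) := fun ψ => Complex.ofRealHom.comp ψ with hf
  have hcard : Fintype.card (K →+* ℝ) = Fintype.card (K →+* ℂ) := by
    rw [← Fintype.card_congr σ, Fintype.card_fin, hn, NumberField.Embeddings.card K ℂ]
  have hinj : Function.Injective f := fun ψ₁ ψ₂ h =>
    RingHom.ext fun v => Complex.ofReal_injective (RingHom.congr_fun h v)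
  have hbij : Function.Bijective f := (Fintype.bijective_iff_injective_and_card f).mpr ⟨hinj, hcard⟩
  have h1 : algebraMap ℚ ℂ (Algebra.norm ℚ x) = ∏ φ : K →ₐ[ℚ] ℂ, φ x :=
    Algebra.norm_eq_prod_embeddings ℚ ℂ x
  have h2 : ∏ φ : K →+* ℂ, (φ x) = algebraMap ℚ ℂ (Algebra.norm ℚ x) := by
    rw [h1]
    exact Fintype.prod_equiv (RingHom.equivRatAlgHom K ℂ) (fun φ => φ x) (fun φ => φ x)
      (fun φ => by simp [RingHom.equivRatAlgHom_apply])
  calc ∏ i, |σ i x| = ∏ ψ : K →+* ℝ, |ψ x| := Equiv.prod_comp σ fun ψ => |ψ x|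
    _ = ∏ ψ : K →+* ℝ, ‖f ψ x‖ := by
        refine Finset.prod_congr rfl fun ψ _ => ?_
        simp [hf]
    _ = ∏ φ : K →+* ℂ, ‖φ x‖ :=
        Fintype.prod_bijective f hbij _ _ fun ψ => rfl
    _ = ‖∏ φ : K →+* ℂ, φ x‖ := (norm_prod _ _).symm
    _ = ‖algebraMap ℚ ℂ (Algebra.norm ℚ x)‖ := by rw [h2]
    _ = |((Algebra.norm ℚ x : ℚ) : ℝ)| := by
        rw [eq_ratCast (algebraMap ℚ ℂ)]
        rw [show ((Algebra.norm ℚ x : ℚ) : ℂ) = (((Algebra.norm ℚ x : ℚ) : ℝ) : ℂ) by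
          push_cast; ring]
        exact (Complex.norm_real _).trans (Real.norm_eq_abs _)

end Aux

/-- If `N(I) ≥ 40^{n/2}` and `A ∈ Γ(I)` has `y₀ = (tr A − 2)/2 ≠ 0`, then for every
`z ∈ (ℍ²)ⁿ`, `d(z, Az) ≥ (4/√n) log N(I) − 2√n log 40`. -/
theorem stmt16 (K : Type*) [Field K] [NumberField K]
    (n : ℕ) (hn : n = Module.finrank ℚ K)
    (σ : Fin n ≃ (K →+* ℝ))
    (I : Ideal (NumberField.RingOfIntegers K))
    (hI : (Ideal.absNorm I : ℝ) ≥ 40 ^ ((n : ℝ) / 2))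
    (A : SL(2, NumberField.RingOfIntegers K))
    (hA : A ∈ (Matrix.SpecialLinearGroup.map (Ideal.Quotient.mk I)).ker)
    (hy₀ : (algebraMap (NumberField.RingOfIntegers K) K (Matrix.trace A.1) - 2) / 2 ≠ 0) :
    ∀ z : Fin n → UpperHalfPlane,
      Real.sqrt (∑ i, (dist (z i)
          ((Matrix.SpecialLinearGroup.map
            ((σ i).comp (algebraMap (NumberField.RingOfIntegers K) K)) A) • z i)) ^ 2) ≥
        (4 / Real.sqrt n) * Real.log (Ideal.absNorm I) - 2 * Real.sqrt n * Real.log 40 := by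
  intro z
  -- entries of A mod I
  have hA1 : A.1.map (Ideal.Quotient.mk I) = (1 : Matrix (Fin 2) (Fin 2) (𝓞 K ⧸ I)) := by
    have h0 : Matrix.SpecialLinearGroup.map (Ideal.Quotient.mk I) A = 1 := hA
    have h1 := Subtype.ext_iff.mp h0
    simpa [Matrix.SpecialLinearGroup.map_apply_coe, RingHom.mapMatrix_apply] using h1
  have entry : ∀ i j, Ideal.Quotient.mk I (A.1 i j) = (1 : Matrix (Fin 2) (Fin 2) (𝓞 K ⧸ I)) i j :=
    fun i j => by have := congrFun (congrFun hA1 i) j; simpa [Matrix.map_apply] using this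
  have h00 : A.1 0 0 - 1 ∈ I := by
    rw [← Ideal.Quotient.eq_zero_iff_mem]
    have h := entry 0 0
    rw [Matrix.one_apply_eq] at h
    simp [map_sub, h]
  have h11 : A.1 1 1 - 1 ∈ I := by
    rw [← Ideal.Quotient.eq_zero_iff_mem]
    have h := entry 1 1
    rw [Matrix.one_apply_eq] at h
    simp [map_sub, h]
  have h01 : A.1 0 1 ∈ I := by
    rw [← Ideal.Quotient.eq_zero_iff_mem, entry 0 1]
    simp [Matrix.one_apply]
  have h10 : A.1 1 0 ∈ I := by
    rw [← Ideal.Quotient.eq_zero_iff_mem, entry 1 0]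
    simp [Matrix.one_apply]
  have hdet : A.1 0 0 * A.1 1 1 - A.1 0 1 * A.1 1 0 = 1 := by
    have := A.2
    rwa [Matrix.det_fin_two] at this
  set xO : 𝓞 K := Matrix.trace A.1 - 2 with hxO
  have hxmem : xO ∈ I ^ 2 := by
    have hxid : xO = A.1 0 1 * A.1 1 0 - (A.1 0 0 - 1) * (A.1 1 1 - 1) := by
      rw [hxO, Matrix.trace_fin_two]
      linear_combination hdet
    rw [hxid, pow_two]
    exact sub_mem (Ideal.mul_mem_mul h01 h10) (Ideal.mul_mem_mul h00 h11)
  set xK : K := algebraMap (𝓞 K) K xO with hxKdef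
  have hxK : xK = algebraMap (𝓞 K) K (Matrix.trace A.1) - 2 := by
    rw [hxKdef, hxO, map_sub, map_ofNat]
  have hxKne : xK ≠ 0 := by
    intro h0
    apply hy₀
    rw [show algebraMap (𝓞 K) K (Matrix.trace A.1) - 2 = xK from hxK.symm, h0, zero_div]
  have hxOne : xO ≠ 0 := fun h0 => hxKne (by rw [hxKdef, h0, map_zero])
  -- norm bound
  have hNpos : 0 < Ideal.absNorm I := by
    rcases Nat.eq_zero_or_pos (Ideal.absNorm I) with h0 | h0
    · exfalso
      rw [h0] at hI
      have : (0:ℝ) < 40 ^ ((n:ℝ)/2) := Real.rpow_pos_of_pos (by norm_num) _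
      push_cast at hI
      linarith
    · exact h0
  have hnormne : Algebra.norm ℤ xO ≠ 0 := Algebra.norm_ne_zero_iff.mpr hxOne
  have hge : ((Ideal.absNorm I : ℤ)) ^ 2 ≤ |Algebra.norm ℤ xO| := by
    have hdvd : (Ideal.absNorm (I ^ 2) : ℤ) ∣ Algebra.norm ℤ xO :=
      Ideal.absNorm_dvd_norm_of_mem hxmem
    rw [map_pow] at hdvd
    push_cast at hdvd
    exact Int.le_of_dvd (abs_pos.mpr hnormne) ((dvd_abs _ _).mpr hdvd)
  have hprod : (Ideal.absNorm I : ℝ) ^ 2 ≤ ∏ i, |σ i xK| := by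
    rw [aux_prod_embeddings hn σ xK]
    have hc : ((Algebra.norm ℤ xO : ℚ) : ℝ) = ((Algebra.norm ℚ xK : ℚ) : ℝ) := by
      rw [Algebra.coe_norm_int]
    calc (Ideal.absNorm I : ℝ) ^ 2 ≤ |((Algebra.norm ℤ xO : ℚ) : ℝ)| := by
          rw [show |((Algebra.norm ℤ xO : ℚ) : ℝ)| = ((|Algebra.norm ℤ xO| : ℤ) : ℝ) by
            push_cast; ring]
          exact_mod_cast hge
      _ = |((Algebra.norm ℚ xK : ℚ) : ℝ)| := by rw [hc]
  -- per-index distance bound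
  have hσne : ∀ i, σ i xK ≠ 0 := fun i h0 => hxKne ((map_eq_zero (σ i)).mp h0)
  have hper : ∀ i, 2 * Real.log |σ i xK| - 2 * Real.log 40 ≤
      dist (z i) ((Matrix.SpecialLinearGroup.map
        ((σ i).comp (algebraMap (NumberField.RingOfIntegers K) K)) A) • z i) := by
    intro i
    set B : SL(2, ℝ) := Matrix.SpecialLinearGroup.map
      ((σ i).comp (algebraMap (NumberField.RingOfIntegers K) K)) A with hB
    have htrO : Matrix.trace A.1 = xO + 2 := by rw [hxO]; ring
    have htr : Matrix.trace (B : Matrix (Fin 2) (Fin 2) ℝ) = σ i xK + 2 := by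
      rw [hB, Matrix.SpecialLinearGroup.map_apply_coe, RingHom.mapMatrix_apply,
        Matrix.trace_fin_two]
      simp only [Matrix.map_apply, RingHom.comp_apply]
      rw [← map_add, ← map_add, show A.1 0 0 + A.1 1 1 = Matrix.trace A.1 from
        (Matrix.trace_fin_two A.1).symm, htrO, map_add, map_add, map_ofNat, map_ofNat]
    set s : ℝ := |σ i xK| with hs
    have hs0 : 0 < s := abs_pos.mpr (hσne i)
    by_cases h40 : s ≤ 40
    · have hl : Real.log s ≤ Real.log 40 := Real.log_le_log hs0 h40
      have hd0 : (0:ℝ) ≤ dist (z i) (B • z i) := dist_nonneg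
      linarith
    · push_neg at h40
      have habs2 : s - 2 ≤ |Matrix.trace (B : Matrix (Fin 2) (Fin 2) ℝ)| := by
        rw [htr]
        have := abs_add_le (σ i xK + 2) (-2)
        simp only [add_neg_cancel_right] at this
        rw [← hs] at this
        have h2 : |(-2 : ℝ)| = 2 := by norm_num
        linarith [this, h2.le]
      have h2le : 2 ≤ |Matrix.trace (B : Matrix (Fin 2) (Fin 2) ℝ)| := by linarith
      have hkey := aux_trace_dist B (z i) h2le
      have l1 : Real.log (s - 3) ≤ Real.log (|Matrix.trace (B : Matrix (Fin 2) (Fin 2) ℝ)| - 1) :=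
        Real.log_le_log (by linarith) (by linarith)
      have l2 : Real.log s - Real.log 40 ≤ Real.log (s - 3) := by
        rw [← Real.log_div (ne_of_gt hs0) (by norm_num : (40:ℝ) ≠ 0)]
        exact Real.log_le_log (by positivity) (by linarith)
      linarith
  -- sum the bounds
  have hnn : 1 ≤ n := by
    rw [hn]
    exact Module.finrank_pos
  have hnR : (0:ℝ) < n := by exact_mod_cast Nat.lt_of_lt_of_le Nat.zero_lt_one hnn
  have hsum : 4 * Real.log (Ideal.absNorm I) - 2 * n * Real.log 40 ≤
      ∑ i, dist (z i) ((Matrix.SpecialLinearGroup.map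
        ((σ i).comp (algebraMap (NumberField.RingOfIntegers K) K)) A) • z i) := by
    have h1 := Finset.sum_le_sum (fun i (_ : i ∈ Finset.univ) => hper i)
    have h2 : ∑ i : Fin n, (2 * Real.log |σ i xK| - 2 * Real.log 40)
        = 2 * Real.log (∏ i, |σ i xK|) - 2 * n * Real.log 40 := by
      rw [Real.log_prod (fun i _ => ne_of_gt (abs_pos.mpr (hσne i))),
        Finset.sum_sub_distrib, Finset.sum_const, Finset.card_univ, Fintype.card_fin,
        ← Finset.mul_sum, nsmul_eq_mul]
      ring
    have h3 : 2 * Real.log ((Ideal.absNorm I : ℝ) ^ 2) ≤ 2 * Real.log (∏ i, |σ i xK|) := by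
      have := Real.log_le_log (by positivity) hprod
      linarith
    rw [Real.log_pow] at h3
    push_cast at h3
    linarith [h1, h2 ▸ h1]
  -- Cauchy-Schwarz and conclusion
  have hcs := sq_sum_le_card_mul_sum_sq (s := (Finset.univ : Finset (Fin n)))
    (f := fun i => dist (z i) ((Matrix.SpecialLinearGroup.map
      ((σ i).comp (algebraMap (NumberField.RingOfIntegers K) K)) A) • z i))
  rw [Finset.card_univ, Fintype.card_fin] at hcs
  have hd0 : (0:ℝ) ≤ ∑ i, dist (z i) ((Matrix.SpecialLinearGroup.map
      ((σ i).comp (algebraMap (NumberField.RingOfIntegers K) K)) A) • z i) :=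
    Finset.sum_nonneg fun i _ => dist_nonneg
  have hsd : ∑ i, dist (z i) ((Matrix.SpecialLinearGroup.map
      ((σ i).comp (algebraMap (NumberField.RingOfIntegers K) K)) A) • z i)
      ≤ Real.sqrt n * Real.sqrt (∑ i, (dist (z i) ((Matrix.SpecialLinearGroup.map
        ((σ i).comp (algebraMap (NumberField.RingOfIntegers K) K)) A) • z i)) ^ 2) := by
    calc _ = Real.sqrt ((∑ i, dist (z i) ((Matrix.SpecialLinearGroup.map
          ((σ i).comp (algebraMap (NumberField.RingOfIntegers K) K)) A) • z i)) ^ 2) :=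
          (Real.sqrt_sq hd0).symm
      _ ≤ Real.sqrt ((n : ℝ) * ∑ i, (dist (z i) ((Matrix.SpecialLinearGroup.map
          ((σ i).comp (algebraMap (NumberField.RingOfIntegers K) K)) A) • z i)) ^ 2) :=
          Real.sqrt_le_sqrt hcs
      _ = _ := Real.sqrt_mul (by positivity) _
  have hsqn : Real.sqrt n * Real.sqrt n = (n : ℝ) := Real.mul_self_sqrt hnR.le
  have hsqnpos : 0 < Real.sqrt n := Real.sqrt_pos.mpr hnR
  rw [ge_iff_le, show (4 / Real.sqrt n) * Real.log (Ideal.absNorm I)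
      - 2 * Real.sqrt n * Real.log 40
      = (4 * Real.log (Ideal.absNorm I) - 2 * n * Real.log 40) / Real.sqrt n by
    field_simp
    linear_combination (-2 * Real.log 40) * hsqn,
    div_le_iff₀ hsqnpos]
  calc 4 * Real.log (Ideal.absNorm I) - 2 * n * Real.log 40
      ≤ ∑ i, dist (z i) ((Matrix.SpecialLinearGroup.map
        ((σ i).comp (algebraMap (NumberField.RingOfIntegers K) K)) A) • z i) := hsum
    _ ≤ Real.sqrt n * Real.sqrt (∑ i, (dist (z i) ((Matrix.SpecialLinearGroup.map
        ((σ i).comp (algebraMap (NumberField.RingOfIntegers K) K)) A) • z i)) ^ 2) := hsd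
    _ = Real.sqrt (∑ i, (dist (z i) ((Matrix.SpecialLinearGroup.map
        ((σ i).comp (algebraMap (NumberField.RingOfIntegers K) K)) A) • z i)) ^ 2)
        * Real.sqrt n := mul_comm _ _
end
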